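/- In the setting of the general linear tracking problem, let A ∈ ℝ^{n×n}, B ∈ ℝ^{n×p}, C ∈ ℝ^{n×m}, D ∈ ℝ^{q×n}, F ∈ ℝ^{q×m}, K ∈ ℝ^{k×n} with rank K = k, G ∈ ℝ^{m×m} symmetric positive definite, and let K⁺, (KB)⁺, (D(K⁺K−I))⁺ be Moore–Penrose pseudoinverses, with H₁, H₂, H₃, H₄, H₅ defined as H₁ = KAK⁺ + KB(KB)⁺KA(D(K⁺K−I))⁺DK⁺, H₂ = KC + KB(KB)⁺KA(D(K⁺K−I))⁺F, H₃ = KB, H₄ = DK⁺ + D(D(K⁺K−I))⁺DK⁺, H₅ = F + D(D(K⁺K−I))⁺F. Assume KB(KB)⁺KA(D(I−K⁺K))⁺D(I−K⁺K) = KA(I−K⁺K). Let P be k×k symmetric positive definite, α > 0, and let Y ∈ ℝ^{p×q} be such that [[PH₁ + H₁ᵀP + αP, PH₂],[H₂ᵀP, −αG]] + [[PH₃YH₄ + (PH₃YH₄)ᵀ, PH₃YH₅],[(PH₃YH₅)ᵀ, 0]] is negative definite. Then X = (KB)⁺KA(D(K⁺K−I))⁺ + Y + (KB)⁺KB·Y·D(D(K⁺K−I))⁺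 satisfies K(A+BXD)(I−K⁺K) = 0 and the block matrix [[P·K(A+BXD)K⁺ + (K(A+BXD)K⁺)ᵀP + αP, P·K(C+BXF)],[(K(C+BXF))ᵀP, −αG]] is negative definite. -/

import Mathlib

open Matrix

/-- `Ap` is the Moore–Penrose pseudoinverse of `A`. -/
def IsMoorePenrose {m n : ℕ} (A : Matrix (Fin m) (Fin n) ℝ)
    (Ap : Matrix (Fin n) (Fin m) ℝ) : Prop :=
  A * Ap * A = A ∧ Ap * A * Ap = Ap ∧ (A * Ap)ᵀ = A * Ap ∧ (Ap * A)ᵀ = Ap * A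

/-- Controller reconstruction: if Y solves the linear matrix inequality (5.9), then
X = (KB)⁺KA(D(K⁺K−I))⁺ + Y + (KB)⁺KB·Y·D(D(K⁺K−I))⁺ satisfies K(A+BXD)(I−K⁺K) = 0
and the closed-loop LMI is negative definite.  Here (D(I−K⁺K))⁺ = −(D(K⁺K−I))⁺. -/
theorem controller_reconstruction (n p q m k : ℕ)
    (A : Matrix (Fin n) (Fin n) ℝ) (B : Matrix (Fin n) (Fin p) ℝ)
    (C : Matrix (Fin n) (Fin m) ℝ) (D : Matrix (Fin q) (Fin n) ℝ)
    (F : Matrix (Fin q) (Fin m) ℝ)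
    (K : Matrix (Fin k) (Fin n) ℝ) (hrankK : K.rank = k)
    (G : Matrix (Fin m) (Fin m) ℝ) (hG : G.PosDef)
    (Kp : Matrix (Fin n) (Fin k) ℝ) (hKp : IsMoorePenrose K Kp)
    (KBp : Matrix (Fin p) (Fin k) ℝ) (hKBp : IsMoorePenrose (K * B) KBp)
    (DKp : Matrix (Fin n) (Fin q) ℝ) (hDKp : IsMoorePenrose (D * (Kp * K - 1)) DKp)
    (H₁ : Matrix (Fin k) (Fin k) ℝ)
    (hH₁ : H₁ = K * A * Kp + K * B * KBp * (K * A) * DKp * (D * Kp))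
    (H₂ : Matrix (Fin k) (Fin m) ℝ)
    (hH₂ : H₂ = K * C + K * B * KBp * (K * A) * DKp * F)
    (H₃ : Matrix (Fin k) (Fin p) ℝ) (hH₃ : H₃ = K * B)
    (H₄ : Matrix (Fin q) (Fin k) ℝ) (hH₄ : H₄ = D * Kp + D * DKp * (D * Kp))
    (H₅ : Matrix (Fin q) (Fin m) ℝ) (hH₅ : H₅ = F + D * DKp * F)
    (hcond : K * B * KBp * (K * A) * (-DKp) * (D * (1 - Kp * K)) = K * A * (1 - Kp * K))
    (P : Matrix (Fin k) (Fin k) ℝ) (hP : P.PosDef)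
    (α : ℝ) (hα : 0 < α)
    (Y : Matrix (Fin p) (Fin q) ℝ)
    (hY : (-(Matrix.fromBlocks (P * H₁ + H₁ᵀ * P + α • P) (P * H₂) (H₂ᵀ * P) (-(α • G)) +
        Matrix.fromBlocks (P * H₃ * Y * H₄ + (P * H₃ * Y * H₄)ᵀ) (P * H₃ * Y * H₅)
          ((P * H₃ * Y * H₅)ᵀ) 0)).PosDef)
    (X : Matrix (Fin p) (Fin q) ℝ)
    (hX : X = KBp * (K * A) * DKp + Y + KBp * (K * B) * Y * (D * DKp)) :
    K * (A + B * X * D) * (1 - Kp * K) = 0 ∧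
    (-(Matrix.fromBlocks
        (P * (K * (A + B * X * D) * Kp) + (K * (A + B * X * D) * Kp)ᵀ * P + α • P)
        (P * (K * (C + B * X * F)))
        ((K * (C + B * X * F))ᵀ * P) (-(α • G)))).PosDef := by
  obtain ⟨hK1, hK2, hK3, hK4⟩ := hKp
  obtain ⟨hB1, hB2, hB3, hB4⟩ := hKBp
  obtain ⟨hD1, hD2, hD3, hD4⟩ := hDKp
  set M : Matrix (Fin q) (Fin n) ℝ := D * (Kp * K - 1) with hMdef
  have hME : M * (Kp * K) = 0 := by
    have h : (Kp * K - 1) * (Kp * K) = 0 := by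
      have h2 : (Kp * K - 1) * (Kp * K) = Kp * (K * Kp * K) - Kp * K := by
        simp only [Matrix.sub_mul, Matrix.one_mul, Matrix.mul_assoc]
      rw [h2, hK1, sub_self]
    rw [hMdef, Matrix.mul_assoc, h, Matrix.mul_zero]
  have hEDM : (Kp * K) * (DKp * M) = 0 := by
    have h1 : DKp * M * (Kp * K) = 0 := by rw [Matrix.mul_assoc, hME, Matrix.mul_zero]
    have h2 := congrArg Matrix.transpose h1
    rw [Matrix.transpose_mul, hK4, hD4, Matrix.transpose_zero] at h2
    exact h2
  have hDDM : D * (DKp * M) = -M := by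
    have hD' : D = D * (Kp * K) - M := by
      rw [hMdef, Matrix.mul_sub, Matrix.mul_one, sub_sub_cancel]
    calc D * (DKp * M) = (D * (Kp * K) - M) * (DKp * M) := by rw [← hD']
    _ = -M := by
        rw [Matrix.sub_mul, Matrix.mul_assoc D (Kp * K) (DKp * M), hEDM, Matrix.mul_zero,
          ← Matrix.mul_assoc M DKp M, hD1, zero_sub]
  have hB1' : ∀ (s : ℕ) (Z : Matrix (Fin p) (Fin s) ℝ),
      K * (B * (KBp * (K * (B * Z)))) = K * (B * Z) := by
    intro s Z
    have h : K * B * KBp * (K * B) * Z = K * B * Z := by rw [hB1]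
    simpa only [Matrix.mul_assoc] using h
  have key : ∀ (s : ℕ) (W : Matrix (Fin q) (Fin s) ℝ),
      K * (B * (X * W)) = K * (B * (KBp * (K * (A * (DKp * W))))) + K * (B * (Y * W))
        + K * (B * (Y * (D * (DKp * W))))  := by
    intro s W
    rw [hX]
    simp only [Matrix.add_mul, Matrix.mul_add, Matrix.mul_assoc, hB1']
  have hNM : D * (1 - Kp * K) = -M := by
    rw [hMdef]
    simp only [Matrix.mul_sub, Matrix.mul_one, neg_sub]
  have goal1 : K * (A + B * X * D) * (1 - Kp * K) = 0 := by
    have h1 : K * (A + B * X * D) * (1 - Kp * K)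
        = K * (A * (1 - Kp * K)) + K * (B * (X * (D * (1 - Kp * K)))) := by
      simp only [Matrix.mul_add, Matrix.add_mul, Matrix.mul_assoc]
    rw [h1, key n (D * (1 - Kp * K))]
    have h2 : D * (DKp * (D * (1 - Kp * K))) = -(D * (1 - Kp * K)) := by
      rw [hNM, Matrix.mul_neg, Matrix.mul_neg, hDDM]
    rw [h2]
    have h3 : K * (B * (KBp * (K * (A * (DKp * (D * (1 - Kp * K)))))))
        = -(K * (A * (1 - Kp * K))) := by
      have hc := hcond
      simp only [Matrix.neg_mul, Matrix.mul_neg, Matrix.mul_assoc] at hc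
      rw [← hc, neg_neg]
    rw [h3]
    simp only [Matrix.mul_neg]
    abel
  refine ⟨goal1, ?_⟩
  have hPsym : Pᵀ = P := by
    have := hP.1
    rw [Matrix.IsHermitian, Matrix.conjTranspose_eq_transpose_of_trivial] at this; exact this
  have eqA : K * (A + B * X * D) * Kp = H₁ + H₃ * Y * H₄ := by
    rw [hH₁, hH₃, hH₄]
    calc K * (A + B * X * D) * Kp = K * (A * Kp) + K * (B * (X * (D * Kp))) := by
          simp only [Matrix.mul_add, Matrix.add_mul, Matrix.mul_assoc]
    _ = _ := by
          rw [key k (D * Kp)]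
          simp only [Matrix.mul_add, Matrix.add_mul, Matrix.mul_assoc]
          abel
  have eqC : K * (C + B * X * F) = H₂ + H₃ * Y * H₅ := by
    rw [hH₂, hH₃, hH₅]
    calc K * (C + B * X * F) = K * C + K * (B * (X * F)) := by
          simp only [Matrix.mul_add, Matrix.mul_assoc]
    _ = _ := by
          rw [key m F]
          simp only [Matrix.mul_add, Matrix.add_mul, Matrix.mul_assoc]
          abel
  have hfinal : Matrix.fromBlocks
      (P * (K * (A + B * X * D) * Kp) + (K * (A + B * X * D) * Kp)ᵀ * P + α • P)
      (P * (K * (C + B * X * F)))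
      ((K * (C + B * X * F))ᵀ * P) (-(α • G))
      = Matrix.fromBlocks (P * H₁ + H₁ᵀ * P + α • P) (P * H₂) (H₂ᵀ * P) (-(α • G)) +
        Matrix.fromBlocks (P * H₃ * Y * H₄ + (P * H₃ * Y * H₄)ᵀ) (P * H₃ * Y * H₅)
          ((P * H₃ * Y * H₅)ᵀ) 0 := by
    rw [eqA, eqC, Matrix.fromBlocks_add]
    congr 1
    all_goals simp only [Matrix.mul_add, Matrix.add_mul, Matrix.transpose_add,
      Matrix.transpose_mul, hPsym, Matrix.mul_assoc, add_zero]
    all_goals try abel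
  rw [hfinal]
  exact hY
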